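/- Suppose α₀, …, α_l and β are ordinals with β + ω ≤ α_l. Then (2^{α₀} ⊕ ⋯ ⊕ 2^{α_l}) ⊕ 2^{α_l} ≥ ((2^{α₀} ⊕ ⋯ ⊕ 2^{α_l}) ⊕ 2^{β} ⊕ 2^{β}) + ω, where ⊕ is the natural sum, the exponentiations are ordinal base-2 exponentiations, and the final + is ordinal addition. -/

import Mathlib

universe u

/-- Natural (Hessenberg) operations on ordinals: `NatOrdinal` is a copy of `Ordinal`
whose addition is the natural sum. (Removed from Mathlib; restored with its old meaning.) -/
def NatOrdinal : Type (u + 1) := Ordinal.{u}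

namespace Ordinal

/-- The natural (Hessenberg) sum of two ordinals. -/
noncomputable def nadd (a b : Ordinal.{u}) : Ordinal.{u} :=
  max (⨆ x : Set.Iio a, Order.succ (nadd x.1 b)) (⨆ y : Set.Iio b, Order.succ (nadd a y.1))
termination_by (a, b)
decreasing_by
  · exact Prod.Lex.left _ _ x.2
  · exact Prod.Lex.right _ y.2

theorem nadd_lt_nadd_right' {a' a : Ordinal.{u}} (b : Ordinal.{u}) (h : a' < a) :
    nadd a' b < nadd a b := by
  rw [nadd.eq_1 a b]
  refine lt_of_lt_of_le (Order.lt_succ _) (le_trans ?_ (le_max_left _ _))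
  exact Ordinal.le_iSup (fun x : Set.Iio a => Order.succ (nadd x.1 b)) ⟨a', h⟩

theorem nadd_lt_nadd_left' (a : Ordinal.{u}) {b' b : Ordinal.{u}} (h : b' < b) :
    nadd a b' < nadd a b := by
  rw [nadd.eq_1 a b]
  refine lt_of_lt_of_le (Order.lt_succ _) (le_trans ?_ (le_max_right _ _))
  exact Ordinal.le_iSup (fun y : Set.Iio b => Order.succ (nadd a y.1)) ⟨b', h⟩

theorem nadd_le_of' {a b c : Ordinal.{u}} (h₁ : ∀ a' < a, nadd a' b < c)
    (h₂ : ∀ b' < b, nadd a b' < c) : nadd a b ≤ c := by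
  rw [nadd.eq_1 a b]
  refine max_le (Ordinal.iSup_le fun x => ?_) (Ordinal.iSup_le fun y => ?_)
  · exact Order.succ_le_of_lt (h₁ _ x.2)
  · exact Order.succ_le_of_lt (h₂ _ y.2)

theorem lt_nadd_iff' {a b c : Ordinal.{u}} (h : c < nadd a b) :
    (∃ a' < a, c ≤ nadd a' b) ∨ (∃ b' < b, c ≤ nadd a b') := by
  by_contra hc
  push Not at hc
  exact absurd h (not_lt.2 (nadd_le_of' hc.1 hc.2))

theorem nadd_mono_left' (a : Ordinal.{u}) {b' b : Ordinal.{u}} (h : b' ≤ b) :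
    nadd a b' ≤ nadd a b := by
  rcases h.lt_or_eq with h | h
  · exact (nadd_lt_nadd_left' a h).le
  · rw [h]

theorem nadd_mono_right' {a' a : Ordinal.{u}} (b : Ordinal.{u}) (h : a' ≤ a) :
    nadd a' b ≤ nadd a b := by
  rcases h.lt_or_eq with h | h
  · exact (nadd_lt_nadd_right' b h).le
  · rw [h]

theorem nadd_comm' (a b : Ordinal.{u}) : nadd a b = nadd b a := by
  induction a using WellFoundedLT.induction generalizing b with
  | _ a iha =>
  induction b using WellFoundedLT.induction with
  | _ b ihb =>
  apply le_antisymm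
  · refine nadd_le_of' (fun a' h => ?_) (fun b' h => ?_)
    · rw [iha a' h]; exact nadd_lt_nadd_left' b h
    · rw [ihb b' h]; exact nadd_lt_nadd_right' a h
  · refine nadd_le_of' (fun b' h => ?_) (fun a' h => ?_)
    · rw [← ihb b' h]; exact nadd_lt_nadd_left' a h
    · rw [← iha a' h]; exact nadd_lt_nadd_right' b h

theorem nadd_zero' (a : Ordinal.{u}) : nadd a 0 = a := by
  induction a using WellFoundedLT.induction with
  | _ a iha =>
  apply le_antisymm
  · refine nadd_le_of' (fun a' h => ?_) (fun b' h => ?_)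
    · rw [iha a' h]; exact h
    · simp at h
  · refine le_of_forall_lt fun c hc => ?_
    rw [← iha c hc]; exact nadd_lt_nadd_right' 0 hc

theorem nadd_assoc' (a b c : Ordinal.{u}) : nadd (nadd a b) c = nadd a (nadd b c) := by
  induction a using WellFoundedLT.induction generalizing b c with
  | _ a iha =>
  induction b using WellFoundedLT.induction generalizing c with
  | _ b ihb =>
  induction c using WellFoundedLT.induction with
  | _ c ihc =>
  apply le_antisymm
  · refine nadd_le_of' (fun d h => ?_) (fun c' h => ?_)
    · rcases lt_nadd_iff' h with ⟨a', ha, hd⟩ | ⟨b', hb, hd⟩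
      · refine lt_of_le_of_lt (nadd_mono_right' c hd) ?_
        rw [iha a' ha]; exact nadd_lt_nadd_right' _ ha
      · refine lt_of_le_of_lt (nadd_mono_right' c hd) ?_
        rw [ihb b' hb]; exact nadd_lt_nadd_left' a (nadd_lt_nadd_right' c hb)
    · rw [ihc c' h]; exact nadd_lt_nadd_left' a (nadd_lt_nadd_left' b h)
  · refine nadd_le_of' (fun a' h => ?_) (fun d h => ?_)
    · rw [← iha a' h]; exact nadd_lt_nadd_right' c (nadd_lt_nadd_right' b h)
    · rcases lt_nadd_iff' h with ⟨b', hb, hd⟩ | ⟨c', hc, hd⟩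
      · refine lt_of_le_of_lt (nadd_mono_left' a hd) ?_
        rw [← ihb b' hb]; exact nadd_lt_nadd_right' c (nadd_lt_nadd_left' a hb)
      · refine lt_of_le_of_lt (nadd_mono_left' a hd) ?_
        rw [← ihc c' hc]; exact nadd_lt_nadd_left' _ hc

end Ordinal

namespace NaturalOps

scoped infixl:65 " ♯ " => Ordinal.nadd

end NaturalOps

noncomputable instance NatOrdinal.linearOrder : LinearOrder NatOrdinal.{u} :=
  inferInstanceAs (LinearOrder Ordinal.{u})

noncomputable instance NatOrdinal.zero : Zero NatOrdinal.{u} := ⟨(0 : Ordinal.{u})⟩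

noncomputable instance NatOrdinal.add : Add NatOrdinal.{u} := ⟨Ordinal.nadd⟩

noncomputable instance NatOrdinal.addCommMonoid : AddCommMonoid NatOrdinal.{u} where
  add_assoc := Ordinal.nadd_assoc'
  zero_add a := (Ordinal.nadd_comm' _ _).trans (Ordinal.nadd_zero' a)
  add_zero := Ordinal.nadd_zero'
  add_comm := Ordinal.nadd_comm'
  nsmul := nsmulRec
  nsmul_zero _ := rfl
  nsmul_succ _ _ := rfl

/-- The identity order isomorphism from `Ordinal` to `NatOrdinal`. -/
noncomputable def Ordinal.toNatOrdinal : Ordinal.{u} ≃o NatOrdinal.{u} := OrderIso.refl _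

/-- The identity order isomorphism from `NatOrdinal` to `Ordinal`. -/
noncomputable def NatOrdinal.toOrdinal : NatOrdinal.{u} ≃o Ordinal.{u} := OrderIso.refl _

open Ordinal
open scoped NaturalOps

/-- The natural (Hessenberg) sum of a finite family of ordinals. -/
noncomputable def natSum {ι : Type*} (s : Finset ι) (f : ι → Ordinal) : Ordinal :=
  NatOrdinal.toOrdinal (∑ i ∈ s, Ordinal.toNatOrdinal (f i))

namespace Ordinal

theorem nadd_le_iff {a b c : Ordinal.{u}} :
    b ♯ c ≤ a ↔ (∀ b' < b, b' ♯ c < a) ∧ ∀ c' < c, b ♯ c' < a :=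
  ⟨fun h => ⟨fun _ hb => (nadd_lt_nadd_right' c hb).trans_le h,
    fun _ hc => (nadd_lt_nadd_left' b hc).trans_le h⟩, fun h => nadd_le_of' h.1 h.2⟩

theorem nadd_lt_nadd_left {b c : Ordinal.{u}} (h : b < c) (a : Ordinal.{u}) : a ♯ b < a ♯ c :=
  nadd_lt_nadd_left' a h

theorem nadd_lt_nadd_right {b c : Ordinal.{u}} (h : b < c) (a : Ordinal.{u}) : b ♯ a < c ♯ a :=
  nadd_lt_nadd_right' a h

theorem nadd_le_nadd_left {b c : Ordinal.{u}} (h : b ≤ c) (a : Ordinal.{u}) : a ♯ b ≤ a ♯ c :=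
  nadd_mono_left' a h

theorem nadd_assoc (a b c : Ordinal.{u}) : a ♯ b ♯ c = a ♯ (b ♯ c) := nadd_assoc' a b c

@[simp] theorem nadd_zero (a : Ordinal.{u}) : a ♯ 0 = a := nadd_zero' a

theorem nadd_succ (a b : Ordinal.{u}) : a ♯ Order.succ b = Order.succ (a ♯ b) := by
  induction a using WellFoundedLT.induction with
  | _ a iha =>
  apply le_antisymm
  · refine nadd_le_of' (fun a' h => ?_) (fun b' h => ?_)
    · rw [iha a' h]; exact Order.succ_lt_succ (nadd_lt_nadd_right' b h)
    · exact Order.lt_succ_of_le (nadd_mono_left' a (Order.lt_succ_iff.1 h))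
  · exact Order.succ_le_of_lt (nadd_lt_nadd_left' a (Order.lt_succ b))

end Ordinal

namespace MeasureDecreaseAux

open Ordinal

/-- Ordinary addition on the right is below natural addition: `(a ♯ b) + c ≤ a ♯ (b + c)`. -/
theorem nadd_add_le (a b c : Ordinal.{u}) : (a ♯ b) + c ≤ a ♯ (b + c) := by
  induction c using limitRecOn with
  | zero => simp
  | add_one c h =>
    rw [← add_assoc, ← add_assoc, add_one_eq_succ, add_one_eq_succ, nadd_succ]
    exact Order.succ_le_succ h
  | limit c hc H =>
    simp_rw [← IsNormal.blsub_eq.{u, u} (isNormal_add_right (a ♯ b)) hc, blsub_le_iff]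
    intro i hi
    exact (H i hi).trans_lt (nadd_lt_nadd_left (add_lt_add_right hi b) a)

/-- Key computational bound on natural addition of ordinals written in base `ω ^ δ`. -/
theorem monomial_nadd_le (δ : Ordinal.{u})
    (hδ : ∀ x y : Ordinal.{u}, x < ω ^ δ → y < ω ^ δ → x ♯ y < ω ^ δ)
    (p q : ℕ) (r s : Ordinal.{u}) (hr : r < ω ^ δ) (hs : s < ω ^ δ) :
    (ω ^ δ * p + r) ♯ (ω ^ δ * q + s) ≤ ω ^ δ * (↑(p + q)) + (r ♯ s) := by
  have hω : (ω : Ordinal.{u}) ^ δ ≠ 0 := (opow_pos δ omega0_pos).ne'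
  rw [nadd_le_iff]
  constructor
  · intro x hx
    rcases lt_or_ge x (ω ^ δ * p) with h | h
    · have hdiv : x / ω ^ δ < (p : Ordinal) := (div_lt hω).2 h
      obtain ⟨p', hp'⟩ := lt_omega0.1 (hdiv.trans (nat_lt_omega0 p))
      have hplt : p' < p := by exact_mod_cast hp' ▸ hdiv
      have e1 : ω ^ δ * (p' : Ordinal) + x % ω ^ δ = x := by
        rw [← hp']; exact div_add_mod x (ω ^ δ)
      calc x ♯ (ω ^ δ * q + s)
          = (ω ^ δ * (p' : Ordinal) + x % ω ^ δ) ♯ (ω ^ δ * q + s) := by rw [e1]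
        _ ≤ ω ^ δ * (↑(p' + q)) + (x % ω ^ δ ♯ s) :=
            monomial_nadd_le δ hδ p' q _ s (mod_lt x hω) hs
        _ < ω ^ δ * (↑(p' + q)) + ω ^ δ :=
            add_lt_add_right (hδ _ _ (mod_lt x hω) hs) _
        _ = ω ^ δ * (↑(p' + q + 1)) := by push_cast; simp [mul_add, mul_succ]
        _ ≤ ω ^ δ * (↑(p + q)) :=
            mul_le_mul_right (by exact_mod_cast (by omega : p' + q + 1 ≤ p + q)) _
        _ ≤ ω ^ δ * (↑(p + q)) + (r ♯ s) := le_self_add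
    · have hx' : x = ω ^ δ * p + (x - ω ^ δ * p) := (Ordinal.add_sub_cancel_of_le h).symm
      have hr'r : x - ω ^ δ * p < r := by
        rw [hx'] at hx
        exact lt_of_add_lt_add_left hx
      calc x ♯ (ω ^ δ * q + s)
          = (ω ^ δ * p + (x - ω ^ δ * p)) ♯ (ω ^ δ * q + s) := by rw [← hx']
        _ ≤ ω ^ δ * (↑(p + q)) + ((x - ω ^ δ * p) ♯ s) :=
            monomial_nadd_le δ hδ p q _ s (hr'r.trans hr) hs
        _ < ω ^ δ * (↑(p + q)) + (r ♯ s) :=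
            add_lt_add_right (nadd_lt_nadd_right hr'r s) _
  · intro y hy
    rcases lt_or_ge y (ω ^ δ * q) with h | h
    · have hdiv : y / ω ^ δ < (q : Ordinal) := (div_lt hω).2 h
      obtain ⟨q', hq'⟩ := lt_omega0.1 (hdiv.trans (nat_lt_omega0 q))
      have hqlt : q' < q := by exact_mod_cast hq' ▸ hdiv
      have e1 : ω ^ δ * (q' : Ordinal) + y % ω ^ δ = y := by
        rw [← hq']; exact div_add_mod y (ω ^ δ)
      calc (ω ^ δ * p + r) ♯ y
          = (ω ^ δ * p + r) ♯ (ω ^ δ * (q' : Ordinal) + y % ω ^ δ) := by rw [e1]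
        _ ≤ ω ^ δ * (↑(p + q')) + (r ♯ y % ω ^ δ) :=
            monomial_nadd_le δ hδ p q' r _ hr (mod_lt y hω)
        _ < ω ^ δ * (↑(p + q')) + ω ^ δ :=
            add_lt_add_right (hδ _ _ hr (mod_lt y hω)) _
        _ = ω ^ δ * (↑(p + q' + 1)) := by push_cast; simp [mul_add, mul_succ]
        _ ≤ ω ^ δ * (↑(p + q)) :=
            mul_le_mul_right (by exact_mod_cast (by omega : p + q' + 1 ≤ p + q)) _
        _ ≤ ω ^ δ * (↑(p + q)) + (r ♯ s) := le_self_add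
    · have hy' : y = ω ^ δ * q + (y - ω ^ δ * q) := (Ordinal.add_sub_cancel_of_le h).symm
      have hs's : y - ω ^ δ * q < s := by
        rw [hy'] at hy
        exact lt_of_add_lt_add_left hy
      calc (ω ^ δ * p + r) ♯ y
          = (ω ^ δ * p + r) ♯ (ω ^ δ * q + (y - ω ^ δ * q)) := by rw [← hy']
        _ ≤ ω ^ δ * (↑(p + q)) + (r ♯ (y - ω ^ δ * q)) :=
            monomial_nadd_le δ hδ p q r _ hr (hs's.trans hs)
        _ < ω ^ δ * (↑(p + q)) + (r ♯ s) :=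
            add_lt_add_right (nadd_lt_nadd_left hs's r) _
termination_by (p + q, r ♯ s)
decreasing_by
  · exact Prod.Lex.left _ _ (by omega)
  · exact Prod.Lex.right _ (nadd_lt_nadd_right hr'r s)
  · exact Prod.Lex.left _ _ (by omega)
  · exact Prod.Lex.right _ (nadd_lt_nadd_left hs's r)

/-- Powers of `ω` are closed under natural addition. -/
theorem nadd_lt_omega0_opow (γ : Ordinal.{u}) :
    ∀ a b : Ordinal.{u}, a < ω ^ γ → b < ω ^ γ → a ♯ b < ω ^ γ := by
  induction γ using limitRecOn with
  | zero =>
    intro a b ha hb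
    rw [opow_zero, Ordinal.lt_one_iff_zero] at ha hb
    subst ha; subst hb
    simp
  | add_one δ IH =>
    intro a b ha hb
    have hω : (ω : Ordinal.{u}) ^ δ ≠ 0 := (opow_pos δ omega0_pos).ne'
    rw [add_one_eq_succ, opow_succ] at ha hb ⊢
    obtain ⟨p, hp⟩ := lt_omega0.1 ((div_lt hω).2 ha)
    obtain ⟨q, hq⟩ := lt_omega0.1 ((div_lt hω).2 hb)
    have hmono := monomial_nadd_le δ IH p q (a % ω ^ δ) (b % ω ^ δ) (mod_lt a hω) (mod_lt b hω)
    rw [← hp, ← hq, div_add_mod, div_add_mod] at hmono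
    calc a ♯ b ≤ ω ^ δ * (↑(p + q)) + (a % ω ^ δ ♯ b % ω ^ δ) := hmono
      _ < ω ^ δ * (↑(p + q)) + ω ^ δ :=
          add_lt_add_right (IH _ _ (mod_lt a hω) (mod_lt b hω)) _
      _ = ω ^ δ * (↑(p + q + 1)) := by push_cast; simp [mul_add, mul_succ]
      _ < ω ^ δ * ω :=
          mul_lt_mul_of_pos_left (nat_lt_omega0 _) (opow_pos δ omega0_pos)
  | limit γ hγ IH =>
    intro a b ha hb
    obtain ⟨γa, hγa, ha'⟩ := (lt_opow_of_isSuccLimit omega0_ne_zero hγ).1 ha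
    obtain ⟨γb, hγb, hb'⟩ := (lt_opow_of_isSuccLimit omega0_ne_zero hγ).1 hb
    have hmax : max γa γb < γ := max_lt hγa hγb
    have h1 : a < ω ^ max γa γb :=
      ha'.trans_le (opow_le_opow_right omega0_pos (le_max_left _ _))
    have h2 : b < ω ^ max γa γb :=
      hb'.trans_le (opow_le_opow_right omega0_pos (le_max_right _ _))
    exact (IH _ hmax a b h1 h2).trans_le (opow_le_opow_right omega0_pos hmax.le)

/-- The core inequality: `(2 ^ β ♯ 2 ^ β) + ω ≤ 2 ^ (β + ω)`. -/
theorem key_ineq (β : Ordinal.{u}) :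
    ((2 : Ordinal.{u}) ^ β ♯ (2 : Ordinal.{u}) ^ β) + ω ≤ (2 : Ordinal.{u}) ^ (β + ω) := by
  set b := β / ω with hb
  have hβω : β + ω = ω * (b + 1) := by
    conv_lhs => rw [← div_add_mod β ω]
    rw [add_assoc, add_omega0 (mod_lt β omega0_ne_zero), ← mul_add_one]
  have h2ω : (2 : Ordinal.{u}) < ω := by exact_mod_cast nat_lt_omega0 2
  have h2 : (2 : Ordinal.{u}) ^ (β + ω) = ω ^ (b + 1) := by
    rw [hβω, opow_mul, opow_omega0 one_lt_two h2ω]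
  have h2β : (2 : Ordinal.{u}) ^ β < ω ^ (b + 1) := by
    rw [← h2]
    exact (opow_lt_opow_iff_right one_lt_two).2 (lt_add_of_pos_right β omega0_pos)
  have hT : (2 : Ordinal.{u}) ^ β ♯ (2 : Ordinal.{u}) ^ β < ω ^ (b + 1) :=
    nadd_lt_omega0_opow _ _ _ h2β h2β
  rw [h2]
  have hωle : (ω : Ordinal.{u}) ≤ ω ^ (b + 1) := by
    calc (ω : Ordinal.{u}) = ω ^ (1 : Ordinal) := (opow_one ω).symm
      _ ≤ ω ^ (b + 1) := opow_le_opow_right omega0_pos (le_add_self)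
  rcases hωle.lt_or_eq with hlt | heq
  · exact (principal_add_omega0_opow (b + 1) hT hlt).le
  · rw [← heq] at hT ⊢
    exact (add_omega0 hT).le

end MeasureDecreaseAux

theorem measure_decrease_append (l : ℕ) (α : ℕ → Ordinal) (β : Ordinal)
    (hβ : β + ω ≤ α l) :
    (natSum (Finset.range (l + 1)) (fun i => (2 : Ordinal) ^ α i)) ♯ (2 : Ordinal) ^ α l ≥
      ((natSum (Finset.range (l + 1)) (fun i => (2 : Ordinal) ^ α i)) ♯
          (2 : Ordinal) ^ β ♯ (2 : Ordinal) ^ β) + ω := by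
  rw [ge_iff_le, nadd_assoc]
  have key : ((2 : Ordinal) ^ β ♯ (2 : Ordinal) ^ β) + ω ≤ (2 : Ordinal) ^ α l :=
    (MeasureDecreaseAux.key_ineq β).trans (opow_le_opow_right zero_lt_two hβ)
  calc (natSum (Finset.range (l + 1)) (fun i => (2 : Ordinal) ^ α i) ♯
        ((2 : Ordinal) ^ β ♯ (2 : Ordinal) ^ β)) + ω
      ≤ natSum (Finset.range (l + 1)) (fun i => (2 : Ordinal) ^ α i) ♯
        (((2 : Ordinal) ^ β ♯ (2 : Ordinal) ^ β) + ω) := MeasureDecreaseAux.nadd_add_le _ _ _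
    _ ≤ _ := nadd_le_nadd_left key _
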